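/- arXiv:2512.21664 — 5 statements merged into one kernel-verified Lean document; each statement's English description precedes it below -/
import Mathlib

section
/- Let 0 < t < t' < 1. Define e_j(s) as the largest prime ≤ s^{-j} (or 2 if s^{-j} < 2). Then for all sufficiently large v, e_v(t) > e_v(t'). -/
/-- `ee t j` is the largest prime `p` with `(p : ℝ) ≤ t⁻ʲ` if `2 ≤ t⁻ʲ`, and `2` otherwise. -/
noncomputable def ee (t : ℝ) (j : ℕ) : ℕ :=
  if 2 ≤ (t ^ j)⁻¹ then sSup {p : ℕ | p.Prime ∧ (p : ℝ) ≤ (t ^ j)⁻¹} else 2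

/-- `ff t j = ∏_{i=1}^j ee t i`. -/
noncomputable def ff (t : ℝ) (j : ℕ) : ℕ := ∏ i ∈ Finset.Icc 1 j, ee t i

lemma bddAbove_primeSet (x : ℝ) : BddAbove {p : ℕ | p.Prime ∧ (p : ℝ) ≤ x} := by
  refine ⟨⌊x⌋₊, fun p hp => Nat.le_floor hp.2⟩

lemma sSup_prime_mem (x : ℝ) (hx : 2 ≤ x) :
    sSup {p : ℕ | p.Prime ∧ (p : ℝ) ≤ x} ∈ {p : ℕ | p.Prime ∧ (p : ℝ) ≤ x} := by
  refine Nat.sSup_mem ⟨2, Nat.prime_two, by exact_mod_cast hx⟩ (bddAbove_primeSet x)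

theorem ee_eventually_gt (t t' : ℝ) (h0 : 0 < t) (htt' : t < t') (h1 : t' < 1) :
    ∀ᶠ v in Filter.atTop, ee t' v < ee t v := by
  have h0' : 0 < t' := h0.trans htt'
  have hhalf : ∀ᶠ v in Filter.atTop, t' ^ v ≤ 1 / 2 := by
    have := tendsto_pow_atTop_nhds_zero_of_lt_one h0'.le h1
    exact this.eventually_le_const (by norm_num)
  have hratio : ∀ᶠ v in Filter.atTop, 2 ≤ (t' / t) ^ v := by
    have := tendsto_pow_atTop_atTop_of_one_lt ((one_lt_div h0).mpr htt')
    exact this.eventually_ge_atTop 2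
  filter_upwards [hhalf, hratio] with v hh hr
  have hpt : 0 < t ^ v := pow_pos h0 v
  have hpt' : 0 < t' ^ v := pow_pos h0' v
  have h2' : (2 : ℝ) ≤ (t' ^ v)⁻¹ := by
    have := inv_anti₀ hpt' hh
    simpa using this
  have h2 : (2 : ℝ) ≤ (t ^ v)⁻¹ := by
    have h1' : (1 : ℝ) ≤ (t' ^ v)⁻¹ := by linarith
    calc (2:ℝ) ≤ 2 * (t' ^ v)⁻¹ := by nlinarith
    _ ≤ (t ^ v)⁻¹ := by
        rw [div_pow] at hr
        have h2a : 2 * t ^ v ≤ t' ^ v := (le_div_iff₀ hpt).mp hr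
        rw [show (2:ℝ) * (t' ^ v)⁻¹ = 2 / t' ^ v by ring,
          show (t ^ v)⁻¹ = 1 / t ^ v by ring, div_le_div_iff₀ hpt' hpt]
        linarith
  -- key: 2 * (t'^v)⁻¹ ≤ (t^v)⁻¹
  have hkey : 2 * (t' ^ v)⁻¹ ≤ (t ^ v)⁻¹ := by
    rw [div_pow] at hr
    have h2a : 2 * t ^ v ≤ t' ^ v := (le_div_iff₀ hpt).mp hr
    rw [show (2:ℝ) * (t' ^ v)⁻¹ = 2 / t' ^ v by ring,
      show (t ^ v)⁻¹ = 1 / t ^ v by ring, div_le_div_iff₀ hpt' hpt]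
    linarith
  rw [ee, ee, if_pos h2, if_pos h2']
  set n := sSup {p : ℕ | p.Prime ∧ (p : ℝ) ≤ (t' ^ v)⁻¹} with hn
  obtain ⟨hnp, hnle⟩ := sSup_prime_mem _ h2'
  obtain ⟨p, hp, hnp2, hp2n⟩ := Nat.exists_prime_lt_and_le_two_mul n hnp.ne_zero
  have hple : (p : ℝ) ≤ (t ^ v)⁻¹ := by
    calc (p : ℝ) ≤ 2 * n := by exact_mod_cast hp2n
    _ ≤ 2 * (t' ^ v)⁻¹ := by linarith
    _ ≤ (t ^ v)⁻¹ := hkey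
  exact lt_of_lt_of_le hnp2 (le_csSup (bddAbove_primeSet _) ⟨hp, hple⟩)
end

section
/- Let 0 < t < t' < 1, and define N_t = { f_j(t) : j ∈ ℕ* } where f_j(s) = ∏_{i=1}^{j} e_i(s) and e_i(s) is the largest prime ≤ s^{-i} (or 2 if s^{-i} < 2). Then N_t ∩ N_{t'} is finite. -/
lemma primeSet_finite (x : ℝ) : {p : ℕ | p.Prime ∧ (p : ℝ) ≤ x}.Finite := by
  apply Set.Finite.subset (Set.finite_Iic ⌈x⌉₊)
  intro p hp
  simp only [Set.mem_Iic]
  exact_mod_cast hp.2.trans (Nat.le_ceil x)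

lemma sSup_mem_primeSet {x : ℝ} (hx : 2 ≤ x) :
    sSup {p : ℕ | p.Prime ∧ (p : ℝ) ≤ x} ∈ {p : ℕ | p.Prime ∧ (p : ℝ) ≤ x} := by
  apply Set.Nonempty.csSup_mem _ (primeSet_finite x)
  exact ⟨2, Nat.prime_two, by exact_mod_cast hx⟩

lemma ee_prime (t : ℝ) (j : ℕ) : (ee t j).Prime := by
  unfold ee
  split
  · exact (sSup_mem_primeSet (by assumption)).1
  · exact Nat.prime_two

lemma two_le_ee (t : ℝ) (j : ℕ) : 2 ≤ ee t j := (ee_prime t j).two_le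

lemma ee_le_ee {t t' : ℝ} {j : ℕ} (h : (t' ^ j)⁻¹ ≤ (t ^ j)⁻¹) : ee t' j ≤ ee t j := by
  unfold ee
  split_ifs with h1 h2 h2
  · apply csSup_le_csSup ((primeSet_finite _).bddAbove)
    · exact ⟨2, Nat.prime_two, by exact_mod_cast h1⟩
    · exact fun p hp => ⟨hp.1, hp.2.trans h⟩
  · exact absurd (h1.trans h) h2
  · exact le_csSup ((primeSet_finite _).bddAbove) ⟨Nat.prime_two, by exact_mod_cast h2⟩
  · exact le_rfl

lemma ee_lt_ee {t t' : ℝ} {j : ℕ} (h2 : 2 ≤ (t' ^ j)⁻¹)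
    (h : 2 * (t' ^ j)⁻¹ ≤ (t ^ j)⁻¹) : ee t' j < ee t j := by
  have h2t : (2 : ℝ) ≤ (t ^ j)⁻¹ := by nlinarith
  set q := ee t' j with hq
  have hqmem : q.Prime ∧ (q : ℝ) ≤ (t' ^ j)⁻¹ := by
    rw [hq]; unfold ee
    rw [if_pos h2]
    exact sSup_mem_primeSet h2
  obtain ⟨p, pp, hqp, hp2q⟩ := Nat.exists_prime_lt_and_le_two_mul q hqmem.1.ne_zero
  have hpmem : (p : ℝ) ≤ (t ^ j)⁻¹ := by
    have : (p : ℝ) ≤ 2 * q := by exact_mod_cast hp2q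
    nlinarith [hqmem.2]
  calc q < p := hqp
    _ ≤ ee t j := by
        unfold ee
        rw [if_pos h2t]
        exact le_csSup ((primeSet_finite _).bddAbove) ⟨pp, hpmem⟩

lemma ff_ne_zero (t : ℝ) (j : ℕ) : ff t j ≠ 0 :=
  Finset.prod_ne_zero_iff.2 fun i _ => (ee_prime t i).ne_zero

open ArithmeticFunction ArithmeticFunction.Omega in
lemma omega_ff (t : ℝ) (j : ℕ) : Ω (ff t j) = j := by
  induction j with
  | zero => simp [ff]
  | succ k ih =>
      have : ff t (k + 1) = ff t k * ee t (k + 1) := by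
        rw [ff, ff, Finset.prod_Icc_succ_top (Nat.le_add_left 1 k)]
      rw [this, cardFactors_mul (ff_ne_zero t k) (ee_prime t (k + 1)).ne_zero, ih,
        cardFactors_apply_prime (ee_prime t (k + 1))]

theorem Nt_inter_finite (t t' : ℝ) (h0 : 0 < t) (htt' : t < t') (h1 : t' < 1) :
    ({n : ℕ | ∃ j, 1 ≤ j ∧ ff t j = n} ∩ {n : ℕ | ∃ j, 1 ≤ j ∧ ff t' j = n}).Finite := by
  have h0' : 0 < t' := h0.trans htt'
  -- eventually (t'^j)⁻¹ ≥ 2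
  have hJ1 : ∀ᶠ j in Filter.atTop, 2 ≤ (t' ^ j)⁻¹ := by
    have h1t' : 1 < (t')⁻¹ := (one_lt_inv₀ h0').2 h1
    have := (tendsto_pow_atTop_atTop_of_one_lt h1t').eventually_ge_atTop 2
    filter_upwards [this] with j hj
    rwa [inv_pow] at hj
  -- eventually 2*(t'^j)⁻¹ ≤ (t^j)⁻¹
  have hJ2 : ∀ᶠ j in Filter.atTop, 2 * (t' ^ j)⁻¹ ≤ (t ^ j)⁻¹ := by
    have hlt1 : t / t' < 1 := (div_lt_one h0').2 htt'
    have h0le : 0 ≤ t / t' := le_of_lt (div_pos h0 h0')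
    have := (tendsto_pow_atTop_nhds_zero_of_lt_one h0le hlt1).eventually
      (gt_mem_nhds (by norm_num : (0 : ℝ) < 1 / 2))
    filter_upwards [this] with j hj
    have htj : 0 < t ^ j := pow_pos h0 j
    have ht'j : 0 < t' ^ j := pow_pos h0' j
    rw [div_pow, div_lt_iff₀ ht'j] at hj
    have key2 : 2 * t ^ j ≤ t' ^ j := by nlinarith
    have h2' : (t' ^ j)⁻¹ ≤ (2 * t ^ j)⁻¹ := inv_anti₀ (by positivity) key2
    rw [mul_inv] at h2'
    have h3 : 0 < (t ^ j)⁻¹ := by positivity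
    nlinarith
  obtain ⟨J, hJ⟩ := Filter.eventually_atTop.1 (hJ1.and hJ2)
  -- for j ≥ max J 1, ff t' j < ff t j
  have key : ∀ j, J ≤ j → 1 ≤ j → ff t' j < ff t j := by
    intro j hJj h1j
    obtain ⟨k, rfl⟩ := Nat.exists_eq_add_of_le h1j
    rw [add_comm] at *
    have hrw : ∀ s : ℝ, ff s (k + 1) = ff s k * ee s (k + 1) := fun s => by
      rw [ff, ff, Finset.prod_Icc_succ_top (Nat.le_add_left 1 k)]
    rw [hrw t, hrw t']
    have hle : ff t' k ≤ ff t k := by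
      apply Finset.prod_le_prod' (f := ee t') (g := ee t)
      intro i hi
      apply ee_le_ee
      have hmono : t ^ i ≤ t' ^ i := pow_le_pow_left₀ h0.le htt'.le i
      exact inv_anti₀ (pow_pos h0 i) hmono
    have hlt : ee t' (k + 1) < ee t (k + 1) := ee_lt_ee (hJ _ hJj).1 (hJ _ hJj).2
    calc ff t' k * ee t' (k + 1) ≤ ff t k * ee t' (k + 1) :=
          Nat.mul_le_mul_right _ hle
      _ < ff t k * ee t (k + 1) :=
          (Nat.mul_lt_mul_left (Nat.pos_of_ne_zero (ff_ne_zero t k))).2 hlt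
  -- the intersection is contained in a finite image
  apply Set.Finite.subset ((Set.finite_Icc 1 (max J 1)).image (ff t'))
  rintro n ⟨⟨j, hj1, rfl⟩, ⟨j', hj'1, hj'⟩⟩
  have hjj' : j = j' := by
    have h1 := omega_ff t j
    have h2 := omega_ff t' j'
    rw [hj'] at h2
    rw [← h1, ← h2]
  subst hjj'
  refine ⟨j, ⟨hj1, ?_⟩, hj'⟩
  by_contra hc
  push_neg at hc
  have : J ≤ j := le_of_lt (lt_of_le_of_lt (le_max_left J 1) hc)
  exact (key j this hj1).ne hj'
end

section
/- Every infinite-dimensional Banach space contains a linearly independent family of vectors of cardinality of the continuum. -/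
open Cardinal

section AuxLIC
variable {𝕜 : Type*} [RCLike 𝕜] {E : Type*} [NormedAddCommGroup E] [NormedSpace 𝕜 E]

/-- In an infinite-dimensional normed space, finitely many functionals have a common
nonzero (norm-one) zero. -/
lemma auxA (hE : ¬ FiniteDimensional 𝕜 E) {n : ℕ} (f : Fin n → (E →L[𝕜] 𝕜)) :
    ∃ x : E, ‖x‖ = 1 ∧ ∀ i, f i x = 0 := by
  have : ∃ v : E, v ≠ 0 ∧ ∀ i, f i v = 0 := by
    by_contra h
    push_neg at h
    have hinj : Function.Injective (LinearMap.pi (fun i => (f i : E →ₗ[𝕜] 𝕜))) := by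
      rw [← LinearMap.ker_eq_bot, Submodule.eq_bot_iff]
      intro v hv
      by_contra hv0
      obtain ⟨i, hi⟩ := h v hv0
      exact hi (congrFun hv i)
    exact hE (FiniteDimensional.of_injective _ hinj)
  obtain ⟨v, hv0, hv⟩ := this
  refine ⟨((‖v‖ : 𝕜))⁻¹ • v, ?_, fun i => ?_⟩
  · rw [norm_smul, norm_inv, RCLike.norm_ofReal, abs_norm, inv_mul_cancel₀ (norm_ne_zero_iff.2 hv0)]
  · rw [map_smul, hv i, smul_zero]

/-- Separation of a point from a finite-dimensional subspace by a continuous functional. -/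
lemma auxB (S : Submodule 𝕜 E) [FiniteDimensional 𝕜 S] {x : E} (hx : x ∉ S) :
    ∃ F : E →L[𝕜] 𝕜, F x = 1 ∧ ∀ y ∈ S, F y = 0 := by
  obtain ⟨π, hπ⟩ := Submodule.ClosedComplemented.of_finiteDimensional S
  have hx' : x - (π x : E) ≠ 0 := by
    intro h
    apply hx
    have : x = (π x : E) := by rwa [sub_eq_zero] at h
    rw [this]; exact (π x).2
  obtain ⟨g, hg⟩ := SeparatingDual.exists_eq_one (R := 𝕜) hx'
  refine ⟨g.comp (ContinuousLinearMap.id 𝕜 E - S.subtypeL.comp π), ?_, fun y hy => ?_⟩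
  · simpa using hg
  · simp [hπ ⟨y, hy⟩]

/-- Existence of a normalized biorthogonal sequence in an infinite-dimensional normed space. -/
lemma exists_biorthogonal (hE : ¬ FiniteDimensional 𝕜 E) :
    ∃ (x : ℕ → E) (f : ℕ → (E →L[𝕜] 𝕜)), (∀ n, ‖x n‖ = 1) ∧
      ∀ i j, f i (x j) = if i = j then 1 else 0 := by
  classical
  set D := E →L[𝕜] 𝕜 with hD
  set Q : List (E × D) → (E × D) → Prop :=
    fun l c => ‖c.1‖ = 1 ∧ c.2 c.1 = 1 ∧ ∀ p ∈ l, c.2 p.1 = 0 ∧ p.2 c.1 = 0 with hQ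
  set pick : List (E × D) → E × D :=
    fun l => if h : ∃ c, Q l c then h.choose else (0, 0) with hpick
  set L : ℕ → List (E × D) := fun n => Nat.rec [] (fun _ l => l ++ [pick l]) n with hL
  set seq : ℕ → E × D := fun n => pick (L n) with hseq
  have hLn : ∀ n, L n = (List.range n).map seq := by
    intro n
    induction n with
    | zero => simp [hL]
    | succ n ih =>
      have : L (n + 1) = L n ++ [pick (L n)] := rfl
      rw [this, List.range_succ, List.map_append]
      exact congrArg₂ _ ih rfl
  -- main invariant
  have main : ∀ n, Q (L n) (seq n) := by
    intro n
    induction n using Nat.strong_induction_on with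
    | _ n ih =>
    have hmem : ∀ p ∈ L n, ∃ m, m < n ∧ p = seq m := by
      intro p hp
      rw [hLn n, List.mem_map] at hp
      obtain ⟨m, hm, rfl⟩ := hp
      exact ⟨m, List.mem_range.mp hm, rfl⟩
    have hex : ∃ c, Q (L n) c := by
      -- find x
      obtain ⟨x, hx1, hx0⟩ := auxA hE (fun i : Fin n => (seq i).2)
      set S : Submodule 𝕜 E := Submodule.span 𝕜 (Set.range (fun i : Fin n => (seq i).1)) with hS
      haveI : FiniteDimensional 𝕜 S := FiniteDimensional.span_of_finite 𝕜 (Set.finite_range _)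
      have hxS : x ∉ S := by
        intro hxmem
        rw [hS, Submodule.mem_span_range_iff_exists_fun] at hxmem
        obtain ⟨c, hc⟩ := hxmem
        have hc0 : ∀ j : Fin n, c j = 0 := by
          intro j
          have h1 : (seq j).2 x = 0 := hx0 j
          rw [← hc] at h1
          rw [map_sum] at h1
          have : ∀ i : Fin n, (seq j).2 (c i • (seq i).1) = if j = i then c i else 0 := by
            intro i
            rw [map_smul]
            rcases eq_or_ne j i with rfl | h
            · rw [if_pos rfl, (ih j j.2).2.1, smul_eq_mul, mul_one]
            · rw [if_neg h]
              have h' : (j : ℕ) ≠ (i : ℕ) := fun hh => h (Fin.ext hh)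
              rcases lt_or_gt_of_ne h' with hlt | hlt
              · -- j < i : seq j ∈ L i, use (ih i).2.2 with p = seq j : p.2 c.1 = 0
                have hmem' : seq j ∈ L i := by
                  rw [hLn]; exact List.mem_map_of_mem (List.mem_range.mpr hlt)
                have := ((ih i i.2).2.2 _ hmem').2
                rw [this, smul_zero]
              · -- i < j : seq i ∈ L j, use (ih j).2.2 : c.2 p.1 = 0
                have hmem' : seq i ∈ L j := by
                  rw [hLn]; exact List.mem_map_of_mem (List.mem_range.mpr hlt)
                have := ((ih j j.2).2.2 _ hmem').1
                rw [this, smul_zero]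
          rw [Finset.sum_congr rfl (fun i _ => this i)] at h1
          simpa using h1
        have : x = 0 := by
          rw [← hc]
          simp [hc0]
        rw [this, norm_zero] at hx1
        norm_num at hx1
      obtain ⟨F, hF1, hF0⟩ := auxB S hxS
      refine ⟨(x, F), hx1, hF1, fun p hp => ?_⟩
      obtain ⟨m, hm, rfl⟩ := hmem p hp
      constructor
      · exact hF0 _ (Submodule.subset_span ⟨⟨m, hm⟩, rfl⟩)
      · exact hx0 ⟨m, hm⟩
    have : seq n = hex.choose := dif_pos hex
    rw [this]
    exact hex.choose_spec
  refine ⟨fun n => (seq n).1, fun n => (seq n).2, fun n => (main n).1, fun i j => ?_⟩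
  rcases eq_or_ne i j with rfl | h
  · rw [if_pos rfl]; exact (main i).2.1
  · rw [if_neg h]
    rcases lt_or_gt_of_ne h with hlt | hlt
    · have hmem' : seq i ∈ L j := by
        rw [hLn]; exact List.mem_map_of_mem (List.mem_range.mpr hlt)
      exact ((main j).2.2 _ hmem').2
    · have hmem' : seq j ∈ L i := by
        rw [hLn]; exact List.mem_map_of_mem (List.mem_range.mpr hlt)
      exact ((main i).2.2 _ hmem').1

/-- Encoding of finite prefixes of a boolean sequence as natural numbers. -/
noncomputable def code (σ : ℕ → Bool) (n : ℕ) : ℕ :=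
  Encodable.encode (List.ofFn (fun i : Fin n => σ i))

lemma code_eq_iff {σ τ : ℕ → Bool} {n m : ℕ} :
    code σ n = code τ m → n = m ∧ ∀ i, i < n → σ i = τ i := by
  intro h
  have h' := Encodable.encode_injective h
  have hn : n = m := by
    have := congrArg List.length h'
    simpa using this
  subst hn
  refine ⟨rfl, fun i hi => ?_⟩
  have := congrArg (fun l : List Bool => l[i]?) h'
  simpa [List.getElem?_ofFn, hi] using this

lemma code_injective (σ : ℕ → Bool) : Function.Injective (code σ) :=
  fun n m h => (code_eq_iff h).1

end AuxLIC

theorem exists_linearIndependent_continuum (𝕜 : Type*) [RCLike 𝕜] (E : Type*)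
    [NormedAddCommGroup E] [NormedSpace 𝕜 E] [CompleteSpace E]
    (hE : ¬ FiniteDimensional 𝕜 E) :
    ∃ s : Set E, Cardinal.mk s = Cardinal.continuum ∧
      LinearIndependent 𝕜 (fun v : s => (v : E)) := by
  classical
  obtain ⟨x, f, hx1, hbi⟩ := exists_biorthogonal hE
  -- the vectors
  set y : (ℕ → Bool) → E := fun σ => ∑' n, ((2 : 𝕜) ^ code σ n)⁻¹ • x (code σ n) with hy
  have hsum : ∀ σ, Summable (fun n => ((2 : 𝕜) ^ code σ n)⁻¹ • x (code σ n)) := by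
    intro σ
    apply Summable.of_norm
    have : (fun n => ‖((2 : 𝕜) ^ code σ n)⁻¹ • x (code σ n)‖)
        = (fun k => ((2 : ℝ) ^ k)⁻¹) ∘ code σ := by
      funext n
      simp [norm_smul, hx1, norm_pow]
    rw [this]
    apply Summable.comp_injective _ (code_injective σ)
    have : (fun k : ℕ => ((2 : ℝ) ^ k)⁻¹) = fun k : ℕ => (1 / 2 : ℝ) ^ k := by
      funext k; rw [one_div, inv_pow]
    rw [this]
    exact summable_geometric_two
  -- evaluation of functionals on the vectors
  have heval : ∀ (σ : ℕ → Bool) (m : ℕ),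
      f m (y σ) = if ∃ n, code σ n = m then ((2 : 𝕜) ^ m)⁻¹ else 0 := by
    intro σ m
    rw [hy]
    rw [ContinuousLinearMap.map_tsum _ (hsum σ)]
    have hterm : ∀ n, f m (((2 : 𝕜) ^ code σ n)⁻¹ • x (code σ n))
        = if m = code σ n then ((2 : 𝕜) ^ m)⁻¹ else 0 := by
      intro n
      rw [map_smul, hbi m (code σ n)]
      rcases eq_or_ne m (code σ n) with h | h
      · rw [if_pos h, if_pos h, smul_eq_mul, mul_one, h]
      · rw [if_neg h, if_neg h, smul_zero]
    by_cases h : ∃ n, code σ n = m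
    · obtain ⟨n0, hn0⟩ := h
      rw [if_pos ⟨n0, hn0⟩]
      rw [tsum_eq_single n0]
      · rw [hterm n0, if_pos hn0.symm]
      · intro b hb
        rw [hterm b, if_neg]
        intro hc
        exact hb (code_injective σ (hn0.trans hc).symm)
    · rw [if_neg h]
      have : ∀ n, f m (((2 : 𝕜) ^ code σ n)⁻¹ • x (code σ n)) = 0 := by
        intro n
        rw [hterm n, if_neg (fun hc => h ⟨n, hc.symm⟩)]
      simp only [this, tsum_zero]
  -- linear independence of the family y
  have hli : LinearIndependent 𝕜 y := by
    rw [linearIndependent_iff']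
    intro s g hsum0 σ hσ
    -- find a long enough prefix of σ not shared by other members of s
    set Dd : (ℕ → Bool) → ℕ := fun τ => if h : ∃ i, σ i ≠ τ i then Nat.find h else 0 with hDd
    set n0 : ℕ := (s.sup Dd) + 1 with hn0
    set m : ℕ := code σ n0 with hm
    have hother : ∀ τ ∈ s, τ ≠ σ → ¬ ∃ k, code τ k = m := by
      intro τ hτ hne ⟨k, hk⟩
      obtain ⟨hkn, hpref⟩ := code_eq_iff hk
      subst hkn
      have hex : ∃ i, σ i ≠ τ i := by
        by_contra hno
        push_neg at hno
        exact hne (funext fun i => (hno i).symm)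
      have h1 : Dd τ = Nat.find hex := by rw [hDd]; simp [dif_pos hex]
      have h2 : Dd τ < n0 := by
        rw [hn0]
        exact Nat.lt_succ_of_le (Finset.le_sup hτ)
      have := hpref (Dd τ) h2
      rw [h1] at this
      exact (Nat.find_spec hex) this.symm
    have happ := congrArg (f m) hsum0
    rw [map_sum, map_zero] at happ
    have hterms : ∀ τ ∈ s, f m (g τ • y τ) = if τ = σ then g σ * ((2:𝕜) ^ m)⁻¹ else 0 := by
      intro τ hτ
      rw [map_smul, heval τ m]
      rcases eq_or_ne τ σ with rfl | hne
      · rw [if_pos rfl, if_pos ⟨n0, rfl⟩, smul_eq_mul]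
      · rw [if_neg (hother τ hτ hne), if_neg hne, smul_zero]
    rw [Finset.sum_congr rfl hterms, Finset.sum_ite_eq' s σ (fun _ => g σ * ((2:𝕜) ^ m)⁻¹),
      if_pos hσ] at happ
    have h2ne : ((2:𝕜) ^ m)⁻¹ ≠ 0 := by
      apply inv_ne_zero
      exact pow_ne_zero _ two_ne_zero
    exact (mul_eq_zero.mp happ).resolve_right h2ne
  refine ⟨Set.range y, ?_, (linearIndepOn_id_range_iff hli.injective).2 hli⟩
  have hinj : Function.Injective y := hli.injective
  have h1 : Cardinal.lift.{0} (#(Set.range y)) = Cardinal.lift.{_} (#(ℕ → Bool)) :=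
    Cardinal.mk_range_eq_lift hinj
  have h2 : #(ℕ → Bool) = Cardinal.continuum := by
    rw [Cardinal.mk_arrow]
    simp [Cardinal.two_power_aleph0]
  rw [h2, Cardinal.lift_continuum, Cardinal.lift_uzero] at h1
  exact h1
end

section
/- Let E be an infinite-dimensional Banach space over ℝ or ℂ. Then there exists a Borel probability measure P on E such that P(M) = 0 for every finite-dimensional linear subspace M of E. -/
open MeasureTheory Nat Topology

open Filter Set Topology Nat in
/-- Auxiliary: the zero set of a nonzero entire function on `𝕜` meets `[0,1] ⊆ ℝ` in a
finite set. -/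
theorem aux_zero_set_finite {𝕜 : Type*} [RCLike 𝕜] {E : Type*} [NormedAddCommGroup E]
    [NormedSpace 𝕜 E] [CompleteSpace E] {p : FormalMultilinearSeries 𝕜 𝕜 E}
    (hp : HasFPowerSeriesOnBall p.sum p 0 ⊤) (Φ : E →L[𝕜] 𝕜) {N : ℕ}
    (hΦ : Φ (p N fun _ => (1 : 𝕜)) ≠ 0) :
    ({t : ℝ | Φ (p.sum (t : 𝕜)) = 0} ∩ Icc 0 1).Finite := by
  by_contra hinf
  rw [← Set.not_infinite, not_not] at hinf
  obtain ⟨x₀, -, hacc⟩ := hinf.exists_accPt_of_subset_isCompact isCompact_Icc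
    inter_subset_right
  -- transfer the accumulation to `𝕜`
  have hfreqR : ∃ᶠ t : ℝ in 𝓝[≠] x₀, Φ (p.sum ((t : ℝ) : 𝕜)) = 0 := by
    rw [accPt_iff_frequently] at hacc
    rw [frequently_nhdsWithin_iff]
    exact hacc.mono fun y hy => ⟨hy.2.1, hy.1⟩
  have htend : Tendsto (fun t : ℝ => (t : 𝕜)) (𝓝[≠] x₀) (𝓝[≠] ((x₀ : ℝ) : 𝕜)) := by
    apply ContinuousWithinAt.tendsto_nhdsWithin
    · exact (RCLike.continuous_ofReal.continuousAt).continuousWithinAt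
    · intro y hy h
      apply hy
      simp only [Set.mem_singleton_iff, Set.mem_compl_iff] at h ⊢
      exact_mod_cast h
  have hfreq : ∃ᶠ z in 𝓝[≠] ((x₀ : ℝ) : 𝕜), Φ (p.sum z) = 0 :=
    htend.frequently hfreqR
  -- identity theorem
  have hanal : AnalyticOnNhd 𝕜 (fun z => Φ (p.sum z)) Set.univ := by
    intro z _
    have : AnalyticAt 𝕜 p.sum z := by
      have := hp.analyticAt_of_mem (by simp [Metric.mem_eball, edist_lt_top] :
        z ∈ Metric.eball (0 : 𝕜) ⊤)
      exact this
    exact (Φ.analyticAt _).comp this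
  have hzero : Set.EqOn (fun z => Φ (p.sum z)) 0 Set.univ :=
    hanal.eqOn_zero_of_preconnected_of_frequently_eq_zero isPreconnected_univ
      (Set.mem_univ _) hfreq
  have hfun : (fun z => Φ (p.sum z)) = 0 := funext fun z => hzero (Set.mem_univ z)
  have hq : HasFPowerSeriesAt (fun z => Φ (p.sum z))
      (Φ.compFormalMultilinearSeries p) 0 :=
    (Φ.comp_hasFPowerSeriesOnBall hp).hasFPowerSeriesAt
  rw [hfun] at hq
  have hq0 := hq.eq_zero
  have : Φ (p N fun _ => (1 : 𝕜)) = 0 := by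
    have := congrFun (congrArg (fun q : FormalMultilinearSeries 𝕜 𝕜 𝕜 => q) hq0) N
    calc Φ (p N fun _ => (1 : 𝕜))
        = (Φ.compFormalMultilinearSeries p) N (fun _ => (1 : 𝕜)) := by
          simp [ContinuousLinearMap.compFormalMultilinearSeries_apply]
      _ = 0 := by rw [hq0]; rfl
  exact hΦ this

theorem exists_probability_measure_annihilating_finiteDimensional
    (𝕜 : Type*) [RCLike 𝕜] (E : Type*)
    [NormedAddCommGroup E] [NormedSpace 𝕜 E] [CompleteSpace E]
    [MeasurableSpace E] [BorelSpace E]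
    (hE : ¬ FiniteDimensional 𝕜 E) :
    ∃ P : Measure E, IsProbabilityMeasure P ∧
      ∀ M : Submodule 𝕜 E, FiniteDimensional 𝕜 M → P (M : Set E) = 0 := by
  classical
  -- a linearly independent sequence
  obtain ⟨e, he⟩ : ∃ e : ℕ → E, LinearIndependent 𝕜 e := by
    let b := Module.Basis.ofVectorSpace 𝕜 E
    have hinf : (Module.Basis.ofVectorSpaceIndex 𝕜 E).Infinite := by
      intro hfin
      have : Fintype (Module.Basis.ofVectorSpaceIndex 𝕜 E) := hfin.fintype
      exact hE (Module.Finite.of_basis b)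
    let f := hinf.natEmbedding
    refine ⟨fun n => (f n : E), ?_⟩
    have : (fun n => (f n : E)) = b ∘ f := by
      funext n; simp [b, Module.Basis.coe_ofVectorSpace]
    rw [this]
    exact b.linearIndependent.comp f f.injective
  -- scaled sequence with fast decay
  set a : ℕ → 𝕜 := fun n => ((n ! : 𝕜))⁻¹ * (((1 + ‖e n‖ : ℝ)) : 𝕜)⁻¹ with ha
  have hapos : ∀ n, (1 : ℝ) + ‖e n‖ > 0 := fun n => by positivity
  have hane : ∀ n, a n ≠ 0 := by
    intro n
    apply mul_ne_zero
    · simp [Nat.factorial_ne_zero]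
    · simp only [ne_eq, inv_eq_zero]
      exact_mod_cast (hapos n).ne'
  set v : ℕ → E := fun n => a n • e n with hv
  have hvnorm : ∀ n, ‖v n‖ ≤ 1 / n ! := by
    intro n
    have h1 : ‖v n‖ = ‖a n‖ * ‖e n‖ := norm_smul _ _
    have h2 : ‖a n‖ = (n ! : ℝ)⁻¹ * (1 + ‖e n‖)⁻¹ := by
      rw [ha]
      simp only [norm_mul, norm_inv, RCLike.norm_natCast, RCLike.norm_ofReal]
      rw [abs_of_pos (hapos n)]
    rw [h1, h2, mul_assoc, one_div]
    apply mul_le_of_le_one_right (by positivity)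
    rw [inv_mul_le_one₀ (hapos n)]
    linarith [norm_nonneg (e n)]
  -- the power series
  set p : FormalMultilinearSeries 𝕜 𝕜 E :=
    fun n => ContinuousMultilinearMap.mkPiRing 𝕜 (Fin n) (v n) with hpdef
  have hrad : p.radius = ⊤ := by
    apply p.radius_eq_top_of_summable_norm
    intro r
    apply Summable.of_nonneg_of_le (fun n => by positivity)
      (fun n => ?_) (Real.summable_pow_div_factorial r)
    have : ‖p n‖ = ‖v n‖ := ContinuousMultilinearMap.norm_mkPiRing (v n)
    rw [this]
    calc ‖v n‖ * (r : ℝ) ^ n ≤ (1 / n !) * (r : ℝ) ^ n := by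
          apply mul_le_mul_of_nonneg_right (hvnorm n) (by positivity)
      _ = (r : ℝ) ^ n / n ! := by ring
  have hps : HasFPowerSeriesOnBall p.sum p 0 ⊤ := by
    have := p.hasFPowerSeriesOnBall (by rw [hrad]; exact ENNReal.zero_lt_top)
    rwa [hrad] at this
  -- the curve
  set γ : ℝ → E := fun t => p.sum (t : 𝕜) with hγ
  have hcont : Continuous γ := by
    have h1 : Continuous p.sum := by
      rw [continuous_iff_continuousAt]
      intro z
      exact (hps.analyticAt_of_mem (by simp [Metric.mem_eball, edist_lt_top])).continuousAt
    exact h1.comp RCLike.continuous_ofReal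
  have hmeas : Measurable γ := hcont.measurable
  -- the measure
  set μ : Measure ℝ := volume.restrict (Set.Ioo (0 : ℝ) 1) with hμ
  have hμprob : IsProbabilityMeasure μ := by
    constructor
    rw [hμ, Measure.restrict_apply_univ, Real.volume_Ioo]
    norm_num
  refine ⟨μ.map γ, Measure.isProbabilityMeasure_map hmeas.aemeasurable, ?_⟩
  intro M hM
  have hMc : IsClosed (M : Set E) := Submodule.closed_of_finiteDimensional M
  rw [Measure.map_apply hmeas hMc.measurableSet, hμ,
    Measure.restrict_apply (hmeas hMc.measurableSet)]
  -- find a vector `e N ∉ M`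
  obtain ⟨N, hN⟩ : ∃ N, e N ∉ M := by
    by_contra hall
    push_neg at hall
    have : LinearIndependent 𝕜 (fun n => (⟨e n, hall n⟩ : M)) :=
      (he.of_comp M.subtype)
    exact Module.Finite.not_linearIndependent_of_infinite _ this
  -- a continuous functional vanishing on `M`, nonzero on `e N`
  obtain ⟨f, hfN, hfM⟩ := Submodule.exists_dual_map_eq_bot_of_notMem hN inferInstance
  set M' : Submodule 𝕜 E := M ⊔ Submodule.span 𝕜 {e N} with hM'
  haveI : FiniteDimensional 𝕜 M' := Submodule.finiteDimensional_sup M _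
  obtain ⟨Φ, hΦext, -⟩ :=
    exists_extension_norm_eq M' (LinearMap.toContinuousLinearMap (f.comp M'.subtype))
  have hΦM : ∀ x ∈ M, Φ x = 0 := by
    intro x hx
    have hx' : x ∈ M' := Submodule.mem_sup_left hx
    have := hΦext ⟨x, hx'⟩
    rw [this]
    simp only [LinearMap.coe_toContinuousLinearMap', LinearMap.coe_comp,
      Function.comp_apply, Submodule.coe_subtype]
    have : f x ∈ M.map f := Submodule.mem_map_of_mem hx
    rw [hfM] at this
    exact (Submodule.mem_bot 𝕜).mp this
  have hΦN : Φ (e N) ≠ 0 := by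
    have hx' : e N ∈ M' :=
      Submodule.mem_sup_right (Submodule.mem_span_singleton_self _)
    have := hΦext ⟨e N, hx'⟩
    rw [this]
    simpa using hfN
  -- the coefficient is nonzero
  have hcoef : Φ (p N fun _ => (1 : 𝕜)) ≠ 0 := by
    have h1 : (p N fun _ => (1 : 𝕜)) = v N := by
      simp [hpdef, ContinuousMultilinearMap.mkPiRing_apply]
    rw [h1, hv]
    simp only [_root_.map_smul, smul_eq_mul]
    exact mul_ne_zero (hane N) hΦN
  -- finiteness of the bad set
  have hfin := aux_zero_set_finite hps Φ hcoef
  refine measure_mono_null ?_ (hfin.measure_zero _)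
  rintro t ⟨ht1, ht2⟩
  refine ⟨?_, Set.Ioo_subset_Icc_self ht2⟩
  exact hΦM _ ht1
end

section
/- With the paper's construction x : (0,1) → E, t ↦ Σ_{u≥1} x_{f_u(t)}/2^{f_u(t)}, the set closure(Range(x)) \ Range(x) is countable; in particular Range(x) is a Borel subset of E. -/
/-- The paper's map `x : (0,1) → E`, `t ↦ ∑_{u ≥ 1} x_{f_u(t)} / 2^{f_u(t)}`. -/
noncomputable def paperMap {E : Type*} [NormedAddCommGroup E] [NormedSpace ℝ E]
    (x : ℕ → E) (t : Set.Ioo (0:ℝ) 1) : E :=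
  ∑' u : ℕ, if 1 ≤ u then ((2 : ℝ) ^ (ff t u))⁻¹ • x (ff t u) else 0

open Filter Topology Set

namespace RCDC

/-- auxiliary: the "largest prime ≤ s (or 2)" function. -/
noncomputable def hh (s : ℝ) : ℕ :=
  if 2 ≤ s then sSup {p : ℕ | p.Prime ∧ (p : ℝ) ≤ s} else 2

lemma ee_eq_hh (t : ℝ) (j : ℕ) : ee t j = hh ((t ^ j)⁻¹) := rfl

lemma bddA (s : ℝ) : BddAbove {p : ℕ | p.Prime ∧ (p : ℝ) ≤ s} :=
  ⟨Nat.floor s, fun p hp => Nat.le_floor hp.2⟩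

lemma two_le_hh (s : ℝ) : 2 ≤ hh s := by
  unfold hh
  split_ifs with h
  · exact le_csSup (bddA s) ⟨Nat.prime_two, by exact_mod_cast h⟩
  · exact le_rfl

lemma hh_const_right (s₀ : ℝ) :
    ∃ η > (0:ℝ), ∀ s, s₀ ≤ s → s < s₀ + η → hh s = hh s₀ := by
  rcases lt_or_ge s₀ 2 with h | h
  · refine ⟨2 - s₀, by linarith, fun s hs1 hs2 => ?_⟩
    unfold hh
    rw [if_neg (by linarith), if_neg (by linarith)]
  · obtain ⟨q, hqle, hq⟩ := Nat.exists_infinite_primes (Nat.floor s₀ + 1)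
    have hq0 : s₀ < (q:ℝ) := by
      have h1 : s₀ < (Nat.floor s₀ : ℝ) + 1 := Nat.lt_floor_add_one s₀
      have h2 : ((Nat.floor s₀ + 1 : ℕ) : ℝ) ≤ (q : ℝ) := by exact_mod_cast hqle
      push_cast at h2
      linarith
    have hne : {q : ℕ | q.Prime ∧ s₀ < (q:ℝ)}.Nonempty := ⟨q, hq, hq0⟩
    set Q := sInf {q : ℕ | q.Prime ∧ s₀ < (q:ℝ)} with hQdef
    have hQmem : Q ∈ {q : ℕ | q.Prime ∧ s₀ < (q:ℝ)} := Nat.sInf_mem hne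
    refine ⟨(Q:ℝ) - s₀, by linarith [hQmem.2], fun s hs1 hs2 => ?_⟩
    have h2s : 2 ≤ s := le_trans h hs1
    have hset : {p : ℕ | p.Prime ∧ (p:ℝ) ≤ s} = {p : ℕ | p.Prime ∧ (p:ℝ) ≤ s₀} := by
      ext p
      simp only [mem_setOf_eq]
      constructor
      · rintro ⟨hp, hps⟩
        refine ⟨hp, ?_⟩
        by_contra hgt
        push_neg at hgt
        have hQp : Q ≤ p := Nat.sInf_le ⟨hp, hgt⟩
        have : (Q:ℝ) ≤ (p:ℝ) := by exact_mod_cast hQp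
        linarith
      · rintro ⟨hp, hps⟩
        exact ⟨hp, le_trans hps hs1⟩
    unfold hh
    rw [if_pos h2s, if_pos h, hset]

lemma hh_const_left (s₀ : ℝ) :
    ∃ v : ℕ, 2 ≤ v ∧ ∃ η > (0:ℝ), (∀ s, s₀ - η < s → s < s₀ → hh s = v) ∧
      ((∀ p : ℕ, p.Prime → (p:ℝ) ≠ s₀) → hh s₀ = v) := by
  rcases le_or_gt s₀ 2 with h | h
  · refine ⟨2, le_rfl, 1, one_pos, fun s _ hs => ?_, fun hnp => ?_⟩
    · unfold hh; rw [if_neg (by linarith)]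
    · have h2 : s₀ ≠ 2 := by
        intro he
        exact hnp 2 Nat.prime_two (by rw [he]; norm_num)
      have : s₀ < 2 := lt_of_le_of_ne h h2
      unfold hh; rw [if_neg (by linarith)]
  · have h2R : ((2:ℕ):ℝ) < s₀ := by exact_mod_cast h
    have hAne : {p : ℕ | p.Prime ∧ (p:ℝ) < s₀}.Nonempty := ⟨2, Nat.prime_two, h2R⟩
    have hAbdd : BddAbove {p : ℕ | p.Prime ∧ (p:ℝ) < s₀} :=
      ⟨Nat.floor s₀, fun p hp => Nat.le_floor hp.2.le⟩
    set P := sSup {p : ℕ | p.Prime ∧ (p:ℝ) < s₀} with hPdef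
    have hPmem : P ∈ {p : ℕ | p.Prime ∧ (p:ℝ) < s₀} := Nat.sSup_mem hAne hAbdd
    have hP2 : 2 ≤ P := le_csSup hAbdd ⟨Nat.prime_two, h2R⟩
    refine ⟨P, hP2, s₀ - (P:ℝ), by linarith [hPmem.2], fun s hs1 hs2 => ?_, fun hnp => ?_⟩
    · have hPs : (P:ℝ) < s := by linarith
      have h2s : 2 ≤ s := by
        have : ((2:ℕ):ℝ) ≤ (P:ℝ) := by exact_mod_cast hP2
        push_cast at this
        linarith
      have hset : {p : ℕ | p.Prime ∧ (p:ℝ) ≤ s} = {p : ℕ | p.Prime ∧ (p:ℝ) < s₀} := by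
        ext p
        simp only [mem_setOf_eq]
        constructor
        · rintro ⟨hp, hps⟩
          exact ⟨hp, lt_of_le_of_lt hps hs2⟩
        · rintro ⟨hp, hps⟩
          have h1 : p ≤ P := le_csSup hAbdd ⟨hp, hps⟩
          have h2 : (p:ℝ) ≤ (P:ℝ) := by exact_mod_cast h1
          exact ⟨hp, le_trans h2 hPs.le⟩
      unfold hh
      rw [if_pos h2s, hset]
    · have hset : {p : ℕ | p.Prime ∧ (p:ℝ) ≤ s₀} = {p : ℕ | p.Prime ∧ (p:ℝ) < s₀} := by
        ext p
        simp only [mem_setOf_eq]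
        constructor
        · rintro ⟨hp, hps⟩
          exact ⟨hp, lt_of_le_of_ne hps (hnp p hp)⟩
        · rintro ⟨hp, hps⟩
          exact ⟨hp, hps.le⟩
      unfold hh
      rw [if_pos h.le, hset]

lemma two_le_ee (t : ℝ) (j : ℕ) : 2 ≤ ee t j := by
  rw [ee_eq_hh]; exact two_le_hh _

lemma two_pow_le_prod (c : ℕ → ℕ) (hc : ∀ i, 2 ≤ c i) (u : ℕ) :
    2 ^ u ≤ ∏ i ∈ Finset.Icc 1 u, c i := by
  have := Finset.pow_card_le_prod (Finset.Icc 1 u) c 2 (fun i _ => hc i)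
  rwa [Nat.card_Icc, Nat.add_sub_cancel] at this

lemma le_prod_of_two_le (c : ℕ → ℕ) (hc : ∀ i, 2 ≤ c i) (u : ℕ) :
    u ≤ ∏ i ∈ Finset.Icc 1 u, c i :=
  le_trans (Nat.lt_two_pow_self (n := u)).le (two_pow_le_prod c hc u)

lemma u_le_ff (t : ℝ) (u : ℕ) : u ≤ ff t u :=
  le_prod_of_two_le (ee t) (fun i => two_le_ee t i) u

section TTsec

variable {E : Type*} [NormedAddCommGroup E] [NormedSpace ℝ E] [CompleteSpace E]

/-- summand -/
noncomputable def term (x : ℕ → E) (F : ℕ → ℕ) (u : ℕ) : E :=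
  if 1 ≤ u then ((2 : ℝ) ^ (F u))⁻¹ • x (F u) else 0

noncomputable def TT (x : ℕ → E) (F : ℕ → ℕ) : E := ∑' u, term x F u

noncomputable def PP (x : ℕ → E) (t : ℝ) : E := TT x (ff t)

lemma paperMap_eq (x : ℕ → E) (t : Set.Ioo (0:ℝ) 1) : paperMap x t = PP x t.val := rfl

lemma range_paperMap (x : ℕ → E) :
    Set.range (paperMap x) = PP x '' (Set.Ioo (0:ℝ) 1) := by
  rw [show paperMap x = (PP x) ∘ (Subtype.val) from rfl, Set.range_comp, Subtype.range_coe]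

lemma norm_term_le_of_le (x : ℕ → E) (hx : ∀ n, ‖x n‖ = 1) (F : ℕ → ℕ) (u N : ℕ)
    (h : N ≤ F u) : ‖term x F u‖ ≤ (2⁻¹ : ℝ) ^ N := by
  unfold term
  split_ifs with hu
  · rw [norm_smul, hx, mul_one, norm_inv, norm_pow, Real.norm_two, ← inv_pow]
    exact pow_le_pow_of_le_one (by norm_num) (by norm_num) h
  · rw [norm_zero]
    positivity

lemma norm_term_le (x : ℕ → E) (hx : ∀ n, ‖x n‖ = 1) (F : ℕ → ℕ) (hF : ∀ u, u ≤ F u)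
    (u : ℕ) : ‖term x F u‖ ≤ (2⁻¹ : ℝ) ^ u :=
  norm_term_le_of_le x hx F u u (hF u)

lemma summable_term (x : ℕ → E) (hx : ∀ n, ‖x n‖ = 1) (F : ℕ → ℕ) (hF : ∀ u, u ≤ F u) :
    Summable (term x F) :=
  Summable.of_norm_bounded (summable_geometric_of_lt_one (by norm_num) (by norm_num))
    (norm_term_le x hx F hF)

lemma tsum_tail_aux (U : ℕ) :
    (∑' u : ℕ, (if u ≤ U then (0:ℝ) else 2 * (2⁻¹:ℝ)^u)) ≤ 4 * (2⁻¹:ℝ)^U := by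
  have hgeo : Summable (fun u : ℕ => (2⁻¹:ℝ)^u) :=
    summable_geometric_of_lt_one (by norm_num) (by norm_num)
  have sB : Summable (fun u : ℕ => if u ≤ U then (0:ℝ) else 2 * (2⁻¹:ℝ)^u) := by
    apply Summable.of_nonneg_of_le (g := fun u : ℕ => if u ≤ U then (0:ℝ) else 2 * (2⁻¹:ℝ)^u)
      (f := fun u : ℕ => 2 * (2⁻¹:ℝ)^u) ?_ ?_ (hgeo.mul_left 2)
    · intro u; split_ifs with h
      · exact le_rfl
      · positivity
    · intro u; split_ifs with h
      · positivity
      · exact le_rfl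
  rw [← Summable.sum_add_tsum_nat_add (U+1) sB]
  have h1 : (∑ i ∈ Finset.range (U+1), (if i ≤ U then (0:ℝ) else 2 * (2⁻¹:ℝ)^i)) = 0 :=
    Finset.sum_eq_zero (fun i hi => if_pos (by
      have := Finset.mem_range.mp hi; omega))
  rw [h1, zero_add]
  have h2 : (fun i : ℕ => if i + (U+1) ≤ U then (0:ℝ) else 2 * (2⁻¹:ℝ)^(i + (U+1)))
      = fun i : ℕ => (2 * (2⁻¹:ℝ)^(U+1)) * (2⁻¹:ℝ)^i := by
    funext i
    rw [if_neg (by omega), pow_add]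
    ring
  calc (∑' i : ℕ, (if i + (U+1) ≤ U then (0:ℝ) else 2 * (2⁻¹:ℝ)^(i + (U+1))))
      = ∑' i : ℕ, (2 * (2⁻¹:ℝ)^(U+1)) * (2⁻¹:ℝ)^i := by rw [h2]
    _ = (2 * (2⁻¹:ℝ)^(U+1)) * ∑' i : ℕ, (2⁻¹:ℝ)^i := tsum_mul_left
    _ = (2 * (2⁻¹:ℝ)^(U+1)) * 2 := by
        rw [tsum_geometric_of_lt_one (by norm_num) (by norm_num)]; norm_num
    _ = 4 * ((2⁻¹:ℝ)^U * 2⁻¹) := by rw [pow_succ]; ring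
    _ ≤ 4 * (2⁻¹:ℝ)^U := by nlinarith [pow_pos (show (0:ℝ) < 2⁻¹ by norm_num) U]

lemma dist_TT (x : ℕ → E) (hx : ∀ n, ‖x n‖ = 1) (F G : ℕ → ℕ)
    (hF : ∀ u, u ≤ F u) (hG : ∀ u, u ≤ G u) (U : ℕ)
    (hFG : ∀ u, u ≤ U → F u = G u) :
    ‖TT x F - TT x G‖ ≤ 4 * (2⁻¹ : ℝ) ^ U := by
  have sF := summable_term x hx F hF
  have sG := summable_term x hx G hG
  have hd : ∀ u, ‖term x F u - term x G u‖ ≤ (if u ≤ U then (0:ℝ) else 2 * (2⁻¹:ℝ)^u) := by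
    intro u
    split_ifs with h
    · have : term x F u = term x G u := by unfold term; rw [hFG u h]
      rw [this, sub_self, norm_zero]
    · calc ‖term x F u - term x G u‖ ≤ ‖term x F u‖ + ‖term x G u‖ := norm_sub_le _ _
        _ ≤ (2⁻¹:ℝ)^u + (2⁻¹:ℝ)^u :=
            add_le_add (norm_term_le x hx F hF u) (norm_term_le x hx G hG u)
        _ = 2 * (2⁻¹:ℝ)^u := by ring
  have hgeo : Summable (fun u : ℕ => (2⁻¹:ℝ)^u) :=
    summable_geometric_of_lt_one (by norm_num) (by norm_num)
  have sB : Summable (fun u : ℕ => if u ≤ U then (0:ℝ) else 2 * (2⁻¹:ℝ)^u) := by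
    apply Summable.of_nonneg_of_le (f := fun u : ℕ => 2 * (2⁻¹:ℝ)^u) ?_ ?_ (hgeo.mul_left 2)
    · intro u; split_ifs with h
      · exact le_rfl
      · positivity
    · intro u; split_ifs with h
      · positivity
      · exact le_rfl
  have snorm : Summable (fun u => ‖term x F u - term x G u‖) :=
    Summable.of_nonneg_of_le (fun u => norm_nonneg _) hd sB
  calc ‖TT x F - TT x G‖ = ‖∑' u, (term x F u - term x G u)‖ := by
        rw [TT, TT, Summable.tsum_sub sF sG]
    _ ≤ ∑' u, ‖term x F u - term x G u‖ := norm_tsum_le_tsum_norm snorm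
    _ ≤ ∑' u, (if u ≤ U then (0:ℝ) else 2 * (2⁻¹:ℝ)^u) := Summable.tsum_le_tsum hd snorm sB
    _ ≤ 4 * (2⁻¹:ℝ)^U := tsum_tail_aux U

lemma exists_U (ε : ℝ) (hε : 0 < ε) : ∃ U : ℕ, 4 * (2⁻¹:ℝ)^U < ε := by
  obtain ⟨U, hU⟩ := exists_pow_lt_of_lt_one (show (0:ℝ) < ε/4 by linarith)
    (show (2⁻¹:ℝ) < 1 by norm_num)
  exact ⟨U, by linarith⟩

end TTsec

lemma tendsto_spow (t₀ : ℝ) (h0 : 0 < t₀) (j : ℕ) :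
    Tendsto (fun t : ℝ => (t ^ j)⁻¹) (𝓝 t₀) (𝓝 ((t₀ ^ j)⁻¹)) := by
  have : ContinuousAt (fun t : ℝ => (t ^ j)⁻¹) t₀ :=
    ((continuous_pow j).continuousAt).inv₀ (pow_ne_zero j (ne_of_gt h0))
  exact this.tendsto

lemma ee_eventually_right (t₀ : ℝ) (h0 : 0 < t₀) (j : ℕ) (hj : 1 ≤ j) :
    ∃ v : ℕ, 2 ≤ v ∧ (∀ᶠ t in 𝓝[>] t₀, ee t j = v) ∧
      ((∀ p : ℕ, p.Prime → (p:ℝ) ≠ (t₀ ^ j)⁻¹) → ee t₀ j = v) := by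
  obtain ⟨v, hv2, η, hη, hconst, hnp⟩ := hh_const_left ((t₀ ^ j)⁻¹)
  refine ⟨v, hv2, ?_, fun h => by rw [ee_eq_hh]; exact hnp h⟩
  have htd := (tendsto_spow t₀ h0 j).mono_left (nhdsWithin_le_nhds (s := Set.Ioi t₀))
  have h1 : ∀ᶠ t in 𝓝[>] t₀, (t₀ ^ j)⁻¹ - η < (t ^ j)⁻¹ :=
    htd.eventually (eventually_gt_nhds (by linarith))
  have h2 : ∀ᶠ t in 𝓝[>] t₀, (t ^ j)⁻¹ < (t₀ ^ j)⁻¹ := by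
    filter_upwards [self_mem_nhdsWithin] with t ht
    have hlt : t₀ ^ j < t ^ j := pow_lt_pow_left₀ ht h0.le (by omega)
    exact (inv_lt_inv₀ (pow_pos (lt_trans h0 ht) j) (pow_pos h0 j)).mpr hlt
  filter_upwards [h1, h2] with t ha hb
  rw [ee_eq_hh]
  exact hconst _ ha hb

lemma ee_eventually_left (t₀ : ℝ) (h0 : 0 < t₀) (j : ℕ) (hj : 1 ≤ j) :
    ∀ᶠ t in 𝓝[<] t₀, ee t j = ee t₀ j := by
  obtain ⟨η, hη, hconst⟩ := hh_const_right ((t₀ ^ j)⁻¹)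
  have htd := (tendsto_spow t₀ h0 j).mono_left (nhdsWithin_le_nhds (s := Set.Iio t₀))
  have h1 : ∀ᶠ t in 𝓝[<] t₀, (t ^ j)⁻¹ < (t₀ ^ j)⁻¹ + η :=
    htd.eventually (eventually_lt_nhds (by linarith))
  have h2 : ∀ᶠ t in 𝓝[<] t₀, (t₀ ^ j)⁻¹ ≤ (t ^ j)⁻¹ := by
    filter_upwards [Ioo_mem_nhdsLT_of_mem (show t₀ ∈ Set.Ioc 0 t₀ from ⟨h0, le_refl _⟩)]
      with t ht
    have hlt : t ^ j < t₀ ^ j := pow_lt_pow_left₀ ht.2 ht.1.le (by omega)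
    exact ((inv_le_inv₀ (pow_pos h0 j) (pow_pos ht.1 j)).mpr hlt.le)
  filter_upwards [h1, h2] with t ha hb
  rw [ee_eq_hh, ee_eq_hh]
  exact hconst _ hb ha

section MainLimits

variable {E : Type*} [NormedAddCommGroup E] [NormedSpace ℝ E] [CompleteSpace E]

lemma ff_congr_of_ee {t : ℝ} {c : ℕ → ℕ} {U : ℕ}
    (h : ∀ j ∈ Finset.Icc 1 U, ee t j = c j) :
    ∀ u, u ≤ U → ff t u = ∏ i ∈ Finset.Icc 1 u, c i := by
  intro u hu
  unfold ff
  refine Finset.prod_congr rfl (fun i hi => ?_)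
  obtain ⟨hi1, hi2⟩ := Finset.mem_Icc.mp hi
  exact h i (Finset.mem_Icc.mpr ⟨hi1, le_trans hi2 hu⟩)

lemma left_cont (x : ℕ → E) (hx : ∀ n, ‖x n‖ = 1) (t₀ : ℝ) (h0 : 0 < t₀) :
    Tendsto (PP x) (𝓝[<] t₀) (𝓝 (PP x t₀)) := by
  rw [Metric.tendsto_nhds]
  intro ε hε
  obtain ⟨U, hU⟩ := exists_U ε hε
  have hev : ∀ᶠ t in 𝓝[<] t₀, ∀ j ∈ Finset.Icc 1 U, ee t j = ee t₀ j :=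
    (eventually_all_finset (Finset.Icc 1 U)).mpr
      (fun j hj => ee_eventually_left t₀ h0 j (Finset.mem_Icc.mp hj).1)
  filter_upwards [hev] with t ht
  have hffeq : ∀ u, u ≤ U → ff t u = ff t₀ u := fun u hu => ff_congr_of_ee ht u hu
  have hb := dist_TT x hx (ff t) (ff t₀) (u_le_ff t) (u_le_ff t₀) U hffeq
  rw [dist_eq_norm]
  exact lt_of_le_of_lt hb hU

lemma right_lim (x : ℕ → E) (hx : ∀ n, ‖x n‖ = 1) (t₀ : ℝ) (h0 : 0 < t₀) :
    ∃ L : E, Tendsto (PP x) (𝓝[>] t₀) (𝓝 L) ∧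
      ((∀ j, 1 ≤ j → ∀ p : ℕ, p.Prime → (p:ℝ) ≠ (t₀ ^ j)⁻¹) → L = PP x t₀) := by
  have H : ∀ j : ℕ, ∃ v : ℕ, 2 ≤ v ∧ (∀ᶠ t in 𝓝[>] t₀, 1 ≤ j → ee t j = v) ∧
      ((∀ p : ℕ, p.Prime → (p:ℝ) ≠ (t₀ ^ j)⁻¹) → 1 ≤ j → ee t₀ j = v) := by
    intro j
    by_cases hj : 1 ≤ j
    · obtain ⟨v, a, b, c⟩ := ee_eventually_right t₀ h0 j hj
      exact ⟨v, a, b.mono (fun t h _ => h), fun hp _ => c hp⟩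
    · exact ⟨2, le_rfl, Eventually.of_forall (fun t h => absurd h hj),
        fun _ h => absurd h hj⟩
  choose c hc2 hcev hcnp using H
  refine ⟨TT x (fun u => ∏ i ∈ Finset.Icc 1 u, c i), ?_, ?_⟩
  · rw [Metric.tendsto_nhds]
    intro ε hε
    obtain ⟨U, hU⟩ := exists_U ε hε
    have hev : ∀ᶠ t in 𝓝[>] t₀, ∀ j ∈ Finset.Icc 1 U, ee t j = c j :=
      (eventually_all_finset (Finset.Icc 1 U)).mpr
        (fun j hj => (hcev j).mono (fun t h => h (Finset.mem_Icc.mp hj).1))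
    filter_upwards [hev] with t ht
    have hffeq : ∀ u, u ≤ U → ff t u = ∏ i ∈ Finset.Icc 1 u, c i :=
      fun u hu => ff_congr_of_ee ht u hu
    have hb := dist_TT x hx (ff t) (fun u => ∏ i ∈ Finset.Icc 1 u, c i) (u_le_ff t)
      (fun u => le_prod_of_two_le c hc2 u) U hffeq
    rw [dist_eq_norm]
    exact lt_of_le_of_lt hb hU
  · intro hS
    have hfeq : (fun u => ∏ i ∈ Finset.Icc 1 u, c i) = ff t₀ := by
      funext u
      unfold ff
      refine Finset.prod_congr rfl (fun i hi => ?_)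
      obtain ⟨hi1, _⟩ := Finset.mem_Icc.mp hi
      exact (hcnp i (hS i hi1) hi1).symm
    rw [PP, hfeq]

lemma ff_succ (t : ℝ) (n : ℕ) : ff t (n + 1) = ff t n * ee t (n + 1) := by
  unfold ff
  exact Finset.prod_Icc_succ_top (by omega) _

lemma ff_ge_ee_one (t : ℝ) (u : ℕ) (hu : 1 ≤ u) : ee t 1 + u ≤ ff t u + 1 := by
  induction u with
  | zero => omega
  | succ n ih =>
    by_cases hn : 1 ≤ n
    · have h1 := ih hn
      have h2 : 2 ≤ ee t (n + 1) := two_le_ee t (n + 1)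
      have h3 : 1 ≤ ff t n := le_trans (Nat.one_le_two_pow) (two_pow_le_prod (ee t)
        (fun i => two_le_ee t i) n)
      have h4 := ff_succ t n
      nlinarith
    · have hn0 : n = 0 := by omega
      subst hn0
      have : ff t (0 + 1) = ee t 1 := by
        unfold ff
        norm_num
      omega

lemma zero_lim (x : ℕ → E) (hx : ∀ n, ‖x n‖ = 1) :
    Tendsto (PP x) (𝓝[>] (0:ℝ)) (𝓝 0) := by
  rw [Metric.tendsto_nhds]
  intro ε hε
  obtain ⟨U, hU⟩ := exists_U ε hε
  obtain ⟨q, hqle, hq⟩ := Nat.exists_infinite_primes (U + 1)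
  have hq2 : 2 ≤ q := hq.two_le
  have hq0 : (0:ℝ) < (q:ℝ) := by positivity
  have hmem : Set.Ioo (0:ℝ) ((q:ℝ))⁻¹ ∈ 𝓝[>] (0:ℝ) :=
    Ioo_mem_nhdsGT_of_mem ⟨le_refl 0, by positivity⟩
  filter_upwards [hmem] with t ht
  have ht0 : 0 < t := ht.1
  have ht1 : (q:ℝ) ≤ (t ^ 1)⁻¹ := by
    rw [pow_one]
    exact ((le_inv_comm₀ hq0 ht0).mpr ht.2.le)
  have h2t : 2 ≤ (t ^ 1)⁻¹ := le_trans (by exact_mod_cast hq2) ht1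
  have heq : q ≤ ee t 1 := by
    unfold ee
    rw [if_pos h2t]
    exact le_csSup (bddA _) ⟨hq, ht1⟩
  -- bound each term
  have hterm : ∀ u : ℕ, ‖term x (ff t) u‖ ≤ (2 * (2⁻¹:ℝ)^q) * (2⁻¹:ℝ)^u := by
    intro u
    by_cases hu : 1 ≤ u
    · obtain ⟨m, rfl⟩ : ∃ m, u = m + 1 := ⟨u - 1, by omega⟩
      have hge : q + m ≤ ff t (m + 1) := by
        have := ff_ge_ee_one t (m + 1) (by omega)
        omega
      have hb := norm_term_le_of_le x hx (ff t) (m + 1) (q + m) hge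
      calc ‖term x (ff t) (m + 1)‖ ≤ (2⁻¹:ℝ)^(q + m) := hb
        _ = (2 * (2⁻¹:ℝ)^q) * (2⁻¹:ℝ)^(m+1) := by
            rw [pow_add, pow_succ]; ring
    · have hu0 : u = 0 := by omega
      subst hu0
      have : term x (ff t) 0 = 0 := by unfold term; simp
      rw [this, norm_zero]
      positivity
  have hgeo : Summable (fun u : ℕ => (2⁻¹:ℝ)^u) :=
    summable_geometric_of_lt_one (by norm_num) (by norm_num)
  have snorm : Summable (fun u => ‖term x (ff t) u‖) :=
    Summable.of_nonneg_of_le (fun u => norm_nonneg _) hterm (hgeo.mul_left _)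
  have hPt : ‖PP x t‖ ≤ 4 * (2⁻¹:ℝ)^q := by
    calc ‖PP x t‖ ≤ ∑' u, ‖term x (ff t) u‖ := norm_tsum_le_tsum_norm snorm
      _ ≤ ∑' u : ℕ, (2 * (2⁻¹:ℝ)^q) * (2⁻¹:ℝ)^u :=
          Summable.tsum_le_tsum hterm snorm (hgeo.mul_left _)
      _ = (2 * (2⁻¹:ℝ)^q) * ∑' u : ℕ, (2⁻¹:ℝ)^u := tsum_mul_left
      _ = (2 * (2⁻¹:ℝ)^q) * 2 := by
          rw [tsum_geometric_of_lt_one (by norm_num) (by norm_num)]; norm_num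
      _ = 4 * (2⁻¹:ℝ)^q := by ring
  have hqU : (2⁻¹:ℝ)^q ≤ (2⁻¹:ℝ)^U :=
    pow_le_pow_of_le_one (by norm_num) (by norm_num) (by omega)
  rw [dist_eq_norm, sub_zero]
  calc ‖PP x t‖ ≤ 4 * (2⁻¹:ℝ)^q := hPt
    _ ≤ 4 * (2⁻¹:ℝ)^U := by linarith
    _ < ε := hU

end MainLimits

/-- The countable set of "threshold" parameters. -/
def SS : Set ℝ := Set.range (fun pj : ℕ × ℕ => (((pj.1 : ℝ)) ^ ((pj.2 : ℝ))⁻¹)⁻¹)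

lemma mem_SS {t₀ : ℝ} (h0 : 0 < t₀) {j : ℕ} (hj : 1 ≤ j) {p : ℕ} (hp : p.Prime)
    (he : (p:ℝ) = (t₀ ^ j)⁻¹) : t₀ ∈ SS := by
  refine ⟨(p, j), ?_⟩
  have hj0 : j ≠ 0 := by omega
  have h1 : t₀ ^ j = ((p:ℝ))⁻¹ := by rw [he, inv_inv]
  have h2 : ((t₀ ^ j : ℝ)) ^ ((j : ℝ))⁻¹ = t₀ := Real.pow_rpow_inv_natCast h0.le hj0
  rw [h1] at h2
  have h3 : (((p:ℝ))⁻¹) ^ ((j : ℝ))⁻¹ = (((p : ℝ)) ^ ((j : ℝ))⁻¹)⁻¹ :=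
    Real.inv_rpow (by positivity) _
  simp only []
  rw [← h3, h2]

lemma countable_SS : SS.Countable := Set.countable_range _

end RCDC

open RCDC in
theorem range_closure_diff_countable (E : Type*)
    [NormedAddCommGroup E] [NormedSpace ℝ E] [CompleteSpace E]
    [MeasurableSpace E] [BorelSpace E]
    (x : ℕ → E) (hx : ∀ n, ‖x n‖ = 1)
    (f : ℕ → (E →L[ℝ] ℝ))
    (hfo : ∀ u v, u ≠ v → f v (x u) = 0) (hfd : ∀ u, f u (x u) ≠ 0) :
    (closure (Set.range (paperMap x)) \ Set.range (paperMap x)).Countable ∧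
    MeasurableSet (Set.range (paperMap x)) := by
  classical
  have hrange : Set.range (paperMap x) = PP x '' (Set.Ioo (0:ℝ) 1) := range_paperMap x
  set D : Set E :=
    insert (PP x 1) (insert 0 ((fun t => limUnder (𝓝[>] t) (PP x)) '' SS)) with hD
  have hDc : D.Countable :=
    (((countable_SS.image _).insert 0).insert _)
  have key : closure (Set.range (paperMap x)) \ Set.range (paperMap x) ⊆ D := by
    rintro y ⟨hyc, hyn⟩
    obtain ⟨w, hw, hwy⟩ := mem_closure_iff_seq_limit.mp hyc
    choose tt htt using hw
    set s : ℕ → ℝ := fun n => (tt n).val with hsdef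
    have hs : ∀ n, s n ∈ Set.Ioo (0:ℝ) 1 := fun n => (tt n).2
    have hPs : ∀ n, PP x (s n) = w n := fun n => htt n
    obtain ⟨t₀, ht₀, φ, hφ, hlim⟩ :=
      (isCompact_Icc (a := (0:ℝ)) (b := 1)).tendsto_subseq
        (fun n => Set.Ioo_subset_Icc_self (hs n))
    have hPy : Tendsto (fun n => PP x (s (φ n))) atTop (𝓝 y) := by
      have h1 : Tendsto (w ∘ φ) atTop (𝓝 y) := hwy.comp hφ.tendsto_atTop
      have h2 : (fun n => PP x (s (φ n))) = w ∘ φ := funext (fun n => hPs (φ n))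
      rw [h2]; exact h1
    by_cases hev : ∀ᶠ n in atTop, s (φ n) ≠ t₀
    · have hor : (∃ᶠ n in atTop, s (φ n) < t₀) ∨ (∃ᶠ n in atTop, t₀ < s (φ n)) := by
        have h1 : ∀ᶠ n in atTop, s (φ n) < t₀ ∨ t₀ < s (φ n) :=
          hev.mono (fun n h => lt_or_gt_of_ne h)
        exact frequently_or_distrib.mp h1.frequently
      rcases hor with hlt | hgt
      · obtain ⟨ψ, hψ, hψlt⟩ := extraction_of_frequently_atTop hlt
        have hlim2 : Tendsto (fun n => s (φ (ψ n))) atTop (𝓝[<] t₀) :=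
          tendsto_nhdsWithin_iff.mpr ⟨hlim.comp hψ.tendsto_atTop,
            Eventually.of_forall hψlt⟩
        have h0 : 0 < t₀ := lt_trans (hs (φ (ψ 0))).1 (hψlt 0)
        have hy2 : y = PP x t₀ :=
          tendsto_nhds_unique (hPy.comp hψ.tendsto_atTop)
            ((left_cont x hx t₀ h0).comp hlim2)
        rcases lt_or_ge t₀ 1 with h1 | h1
        · exact absurd (by rw [hrange]; exact ⟨t₀, ⟨h0, h1⟩, hy2.symm⟩) hyn
        · have ht1 : t₀ = 1 := le_antisymm ht₀.2 h1
          rw [hD]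
          left
          rw [hy2, ht1]
      · obtain ⟨ψ, hψ, hψgt⟩ := extraction_of_frequently_atTop hgt
        have hlim2 : Tendsto (fun n => s (φ (ψ n))) atTop (𝓝[>] t₀) :=
          tendsto_nhdsWithin_iff.mpr ⟨hlim.comp hψ.tendsto_atTop,
            Eventually.of_forall hψgt⟩
        have h1 : t₀ < 1 := lt_trans (hψgt 0) (hs (φ (ψ 0))).2
        rcases eq_or_lt_of_le ht₀.1 with h0 | h0
        · -- t₀ = 0
          have hz := zero_lim (E := E) x hx
          have hy2 : y = 0 := by
            refine tendsto_nhds_unique (hPy.comp hψ.tendsto_atTop) (hz.comp ?_)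
            rw [← h0] at hlim2
            exact hlim2
          rw [hD, hy2]
          right; left; rfl
        · obtain ⟨L, hL, hLP⟩ := right_lim x hx t₀ h0
          have hy2 : y = L :=
            tendsto_nhds_unique (hPy.comp hψ.tendsto_atTop) (hL.comp hlim2)
          by_cases hSS : t₀ ∈ SS
          · have hLlim : limUnder (𝓝[>] t₀) (PP x) = L := hL.limUnder_eq
            rw [hD]
            right; right
            exact ⟨t₀, hSS, show limUnder (𝓝[>] t₀) (PP x) = y by rw [hLlim, hy2]⟩
          · have hLp : L = PP x t₀ :=
              hLP (fun j hj p hp he => hSS (mem_SS h0 hj hp he))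
            have hy3 : PP x t₀ = y := by rw [← hLp, hy2]
            exact absurd (by rw [hrange]; exact ⟨t₀, ⟨h0, h1⟩, hy3⟩) hyn
    · have hfreq : ∃ᶠ n in atTop, s (φ n) = t₀ := by
        rw [Filter.not_eventually] at hev
        exact hev.mono (fun n h => not_not.mp h)
      obtain ⟨ψ, hψ, hψeq⟩ := extraction_of_frequently_atTop hfreq
      have hconst : (fun n => PP x (s (φ n))) ∘ ψ = fun _ => PP x t₀ :=
        funext (fun n => by simp only [Function.comp_apply, hψeq n])
      have hy2 : y = PP x t₀ := by
        refine tendsto_nhds_unique (hPy.comp hψ.tendsto_atTop) ?_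
        rw [hconst]
        exact tendsto_const_nhds
      have ht₀mem : t₀ ∈ Set.Ioo (0:ℝ) 1 := hψeq 0 ▸ hs (φ (ψ 0))
      exact absurd (by rw [hrange]; exact ⟨t₀, ht₀mem, hy2.symm⟩) hyn
  constructor
  · exact hDc.mono key
  · have h1 : Set.range (paperMap x) =
        closure (Set.range (paperMap x)) \
          (closure (Set.range (paperMap x)) \ Set.range (paperMap x)) :=
      (Set.diff_diff_cancel_left subset_closure).symm
    rw [h1]
    exact (isClosed_closure.measurableSet).diff ((hDc.mono key).measurableSet)
end
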